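/- Hidden-hallucination incentive step: let (Ω,𝓕,P) be a probability space carrying a random tabular MDP model μ*, an event A with P(A) > 0, and a {0,1}-valued random variable Z with P(A ∩ {Z=0}) > 0; set p := P(Z=1 | A). Let Π be a nonempty subset of the (finite) set Π_mkv of all policies with Π ≠ Π_mkv, and suppose g > 0 satisfies max_{π ∈ Π} E[V(π,μ*) | A, Z=0] − max_{π ∈ Π_mkv∖Π} E[V(π,μ*) | A, Z=0] ≥ g. If p < g/(2H), then every maximizer over Π_mkv of π ↦ E[V(π,μ*) | A] lies in Π. -/

import Mathlib

open Finset

noncomputable section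

/-- A tabular MDP model with `S` states, `A` actions and horizon `H`:
an initial-state distribution, transition distributions for every triple `(x,a,h)`,
and mean rewards in `[0,1]`. -/
structure MDPModel (S A H : ℕ) where
  init : Fin S → ℝ
  trans : Fin S → Fin A → Fin H → Fin S → ℝ
  reward : Fin S → Fin A → Fin H → ℝ
  init_nonneg : ∀ x, 0 ≤ init x
  init_sum : ∑ x, init x = 1
  trans_nonneg : ∀ x a h x', 0 ≤ trans x a h x'
  trans_sum : ∀ x a h, ∑ x', trans x a h x' = 1
  reward_nonneg : ∀ x a h, 0 ≤ reward x a h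
  reward_le_one : ∀ x a h, reward x a h ≤ 1

/-- A (deterministic Markovian) policy. -/
abbrev Policy (S A H : ℕ) := Fin S → Fin H → Fin A

namespace MDPModel

variable {S A H : ℕ}

/-- Probability of the state trajectory `t` under model `μ` and policy `π`:
`x₁ ∼ init`, `a_h = π (x_h, h)`, `x_{h+1} ∼ trans (x_h, a_h, h)`. -/
def trajP (μ : MDPModel S A H) (π : Policy S A H) (t : Fin H → Fin S) : ℝ :=
  (if hH : 0 < H then μ.init (t ⟨0, hH⟩) else 1) *
    ∏ h : Fin H,
      (if hh : (h : ℕ) + 1 < H then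
        μ.trans (t h) (π (t h) h) h (t ⟨(h : ℕ) + 1, hh⟩) else 1)

/-- Expectation of a trajectory functional under `P^π_μ`. -/
def expect (μ : MDPModel S A H) (π : Policy S A H) (f : (Fin H → Fin S) → ℝ) : ℝ :=
  ∑ t : Fin H → Fin S, μ.trajP π t * f t

/-- Probability of a trajectory event under `P^π_μ`. -/
def probEvent (μ : MDPModel S A H) (π : Policy S A H) (E : (Fin H → Fin S) → Prop) : ℝ :=
  ∑ t : Fin H → Fin S, Set.indicator {t' | E t'} (μ.trajP π) t

/-- ℓ1 distance between two functions on `Fin S`. -/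
def l1 (p q : Fin S → ℝ) : ℝ := ∑ x, |p x - q x|

/-- Two models are `ε`-similar on `Uᶜ`: the initial-state distributions are `ε`-close in ℓ1,
and so are the transition distributions at every triple outside `U`. -/
def SimilarOn (μ ν : MDPModel S A H) (U : Finset (Fin S × Fin A × Fin H)) (ε : ℝ) : Prop :=
  l1 μ.init ν.init ≤ ε ∧
    ∀ x a h, (x, a, h) ∉ U → l1 (μ.trans x a h) (ν.trans x a h) ≤ ε

/-- The event `E_h`: all triples visited before stage `h` lie outside `U`. -/
def preOutside (π : Policy S A H) (U : Finset (Fin S × Fin A × Fin H))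
    (t : Fin H → Fin S) (h : Fin H) : Prop :=
  ∀ τ : Fin H, τ < h → (t τ, π (t τ) τ, τ) ∉ U

/-- The event `E_U`: the trajectory visits some triple in `U`. -/
def visits (π : Policy S A H) (U : Finset (Fin S × Fin A × Fin H))
    (t : Fin H → Fin S) : Prop :=
  ∃ h : Fin H, (t h, π (t h) h, h) ∈ U

/-- The value of policy `π` under model `μ`. -/
def value (μ : MDPModel S A H) (π : Policy S A H) : ℝ :=
  μ.expect π (fun t => ∑ h : Fin H, μ.reward (t h) (π (t h) h) h)

/-- A model is `ε`-punished on `Uᶜ`: mean rewards outside `U` are at most `ε`. -/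
def PunishedOn (μ : MDPModel S A H) (U : Finset (Fin S × Fin A × Fin H)) (ε : ℝ) : Prop :=
  ∀ x a h, (x, a, h) ∉ U → μ.reward x a h ≤ ε

/-- `ω*^π(x,a,h)`: the probability under `μ*` that the trajectory is at `(x,a)` at stage `h`
having visited only triples outside `U` before stage `h`. -/
def omegaStar (μstar : MDPModel S A H) (π : Policy S A H)
    (U : Finset (Fin S × Fin A × Fin H)) (x : Fin S) (a : Fin A) (h : Fin H) : ℝ :=
  μstar.probEvent π (fun t => t h = x ∧ π (t h) h = a ∧ preOutside π U t h)

end MDPModel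

open MDPModel

open MeasureTheory

/-- Conditional expectation of `f` given the event `A`: `E[f | A] = (∫_A f dP) / P(A)`. -/
def condExpOn {Ω : Type*} [MeasurableSpace Ω] (P : Measure Ω) (A : Set Ω) (f : Ω → ℝ) : ℝ :=
  (∫ ω in A, f ω ∂P) / (P A).toReal

namespace MDPModel
variable {S A H : ℕ}

lemma chainSum (S : ℕ) : ∀ (n : ℕ) (p0 : Fin S → ℝ) (K : Fin S → Fin n → Fin S → ℝ),
    (∑ x, p0 x = 1) → (∀ x h, ∑ y, K x h y = 1) →
    ∑ t : Fin (n+1) → Fin S, p0 (t 0) * ∏ h : Fin n, K (t h.castSucc) h (t h.succ) = 1 := by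
  intro n
  induction n with
  | zero =>
    intro p0 K h0 hK
    simp only [Finset.univ_eq_empty, Finset.prod_empty, mul_one]
    rw [← h0]
    exact Fintype.sum_equiv (Equiv.funUnique (Fin 1) (Fin S)) _ _ (fun t => rfl)
  | succ n ih =>
    intro p0 K h0 hK
    set F : (Fin (n+2) → Fin S) → ℝ := fun t =>
      p0 (t 0) * ∏ h : Fin (n+1), K (t h.castSucc) h (t h.succ) with hF
    have heq := Fintype.sum_equiv (Fin.snocEquiv (fun _ : Fin (n+2) => Fin S))
      (fun q : Fin S × (Fin (n+1) → Fin S) => F (Fin.snoc q.2 q.1)) F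
      (fun q => by simp [Fin.snocEquiv])
    rw [← heq, Fintype.sum_prod_type_right]
    have key : ∀ s : Fin (n+1) → Fin S, ∑ y : Fin S, F (Fin.snoc s y)
        = p0 (s 0) * ∏ h : Fin n, K (s h.castSucc) h.castSucc (s h.succ) := by
      intro s
      have hprod : ∀ y : Fin S, (∏ h : Fin (n+1), K ((Fin.snoc s y : Fin (n+2) → Fin S) h.castSucc) h
          ((Fin.snoc s y : Fin (n+2) → Fin S) h.succ))
          = (∏ h : Fin n, K (s h.castSucc) h.castSucc (s h.succ)) * K (s (Fin.last n)) (Fin.last n) y := by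
        intro y
        rw [Fin.prod_univ_castSucc]
        congr 1
        · apply Finset.prod_congr rfl
          intro h _
          rw [Fin.snoc_castSucc, Fin.succ_castSucc, Fin.snoc_castSucc]
        · rw [Fin.snoc_castSucc, Fin.succ_last, Fin.snoc_last]
      have hz : ∀ y : Fin S, (Fin.snoc s y : Fin (n+2) → Fin S) 0 = s 0 := by
        intro y
        rw [show (0 : Fin (n+2)) = Fin.castSucc (0 : Fin (n+1)) from rfl, Fin.snoc_castSucc]
      simp only [hF, hprod, hz, ← mul_assoc, ← Finset.mul_sum, hK]
      ring
    simp only [key]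
    exact ih p0 (fun x h y => K x h.castSucc y) h0 (fun x h => hK x h.castSucc)

lemma trajP_nonneg (μ : MDPModel S A H) (π : Policy S A H) (t : Fin H → Fin S) :
    0 ≤ μ.trajP π t := by
  unfold trajP
  apply mul_nonneg
  · split
    · exact μ.init_nonneg _
    · norm_num
  · apply Finset.prod_nonneg
    intro h _
    split
    · exact μ.trans_nonneg _ _ _ _
    · norm_num

lemma sum_trajP (μ : MDPModel S A H) (π : Policy S A H) :
    ∑ t : Fin H → Fin S, μ.trajP π t = 1 := by
  rcases H with _ | n
  · rw [show (Finset.univ : Finset (Fin 0 → Fin S)) = {fun x => x.elim0} from by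
      apply Finset.eq_singleton_iff_unique_mem.2
      exact ⟨Finset.mem_univ _, fun t _ => funext fun x => x.elim0⟩]
    rw [Finset.sum_singleton]
    unfold trajP
    simp
  · have := chainSum S n μ.init
      (fun x h y => μ.trans x (π x h.castSucc) h.castSucc y) μ.init_sum
      (fun x h => μ.trans_sum _ _ _)
    rw [← this]
    apply Finset.sum_congr rfl
    intro t _
    unfold trajP
    rw [dif_pos (Nat.succ_pos n)]
    congr 1
    rw [Fin.prod_univ_castSucc]
    have hlast : (if hh : ((Fin.last n : Fin (n+1)) : ℕ) + 1 < n + 1 then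
        μ.trans (t (Fin.last n)) (π (t (Fin.last n)) (Fin.last n)) (Fin.last n)
          (t ⟨((Fin.last n : Fin (n+1)) : ℕ) + 1, hh⟩) else 1) = 1 := by
      rw [dif_neg]
      simp
    rw [hlast, mul_one]
    apply Finset.prod_congr rfl
    intro h _
    have hc : ((h.castSucc : Fin (n+1)) : ℕ) + 1 < n + 1 := by
      simp
    rw [dif_pos hc]
    congr 1

lemma value_nonneg (μ : MDPModel S A H) (π : Policy S A H) : 0 ≤ μ.value π := by
  apply Finset.sum_nonneg
  intro t _
  exact mul_nonneg (μ.trajP_nonneg π t)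
    (Finset.sum_nonneg fun h _ => μ.reward_nonneg _ _ _)

lemma value_le (μ : MDPModel S A H) (π : Policy S A H) : μ.value π ≤ H := by
  have : μ.value π ≤ ∑ t : Fin H → Fin S, μ.trajP π t * H := by
    apply Finset.sum_le_sum
    intro t _
    apply mul_le_mul_of_nonneg_left _ (μ.trajP_nonneg π t)
    calc (∑ h : Fin H, μ.reward (t h) (π (t h) h) h) ≤ ∑ _h : Fin H, (1:ℝ) :=
        Finset.sum_le_sum fun h _ => μ.reward_le_one _ _ _
      _ = H := by simp
  calc μ.value π ≤ ∑ t : Fin H → Fin S, μ.trajP π t * H := this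
    _ = (∑ t : Fin H → Fin S, μ.trajP π t) * H := by rw [Finset.sum_mul]
    _ = H := by rw [sum_trajP]; ring

end MDPModel

theorem hh_aux {Ω : Type*} [MeasurableSpace Ω] (P : MeasureTheory.Measure Ω) [IsProbabilityMeasure P]
    (Pol : Type*) [Fintype Pol] [DecidableEq Pol]
    (V : Pol → Ω → ℝ) (H : ℕ)
    (hVnn : ∀ π ω, 0 ≤ V π ω) (hVle : ∀ π ω, V π ω ≤ H)
    (hint : ∀ π, Integrable (V π) P)
    (Aev : Set Ω) (hAmeas : MeasurableSet Aev) (hApos : 0 < P Aev)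
    (Z : Ω → Bool) (hZmeas : Measurable Z)
    (hAZ0 : 0 < P (Aev ∩ {ω | Z ω = false}))
    (Pi : Finset Pol) (hne : Pi.Nonempty)
    (hcne : (Finset.univ \ Pi).Nonempty)
    (g : ℝ) (hg : 0 < g)
    (hgap : g ≤
      Pi.sup' hne (fun π => condExpOn P (Aev ∩ {ω | Z ω = false}) (V π)) -
        (Finset.univ \ Pi).sup' hcne (fun π => condExpOn P (Aev ∩ {ω | Z ω = false}) (V π)))
    (hp : (P ({ω | Z ω = true} ∩ Aev)).toReal / (P Aev).toReal < g / (2 * (H : ℝ))) :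
    ∀ π0 : Pol, (∀ π : Pol, condExpOn P Aev (V π) ≤ condExpOn P Aev (V π0)) → π0 ∈ Pi := by
  set Z0 : Set Ω := {ω | Z ω = false} with hZ0
  set Z1 : Set Ω := {ω | Z ω = true} with hZ1
  have mZ0 : MeasurableSet Z0 := hZmeas (measurableSet_singleton false)
  have mZ1 : MeasurableSet Z1 := hZmeas (measurableSet_singleton true)
  set a : ℝ := (P (Aev ∩ Z0)).toReal with haDef
  set b : ℝ := (P (Aev ∩ Z1)).toReal with hbDef
  set c : ℝ := (P Aev).toReal with hcDef
  have ha : 0 < a := ENNReal.toReal_pos hAZ0.ne' (measure_ne_top _ _)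
  have hc : 0 < c := ENNReal.toReal_pos hApos.ne' (measure_ne_top _ _)
  have hb : 0 ≤ b := ENNReal.toReal_nonneg
  have hd : Disjoint (Aev ∩ Z0) (Aev ∩ Z1) := by
    rw [Set.disjoint_left]
    rintro ω ⟨-, h0⟩ ⟨-, h1⟩
    simp only [hZ0, hZ1, Set.mem_setOf_eq] at h0 h1
    rw [h0] at h1; exact Bool.false_ne_true h1
  have hunion : (Aev ∩ Z0) ∪ (Aev ∩ Z1) = Aev := by
    ext ω
    by_cases hz : Z ω <;>
      simp [hZ0, hZ1, Set.mem_inter_iff, Set.mem_setOf_eq, hz]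
  have habc : a + b = c := by
    have hm : P Aev = P (Aev ∩ Z0) + P (Aev ∩ Z1) := by
      rw [← measure_union hd (hAmeas.inter mZ1), hunion]
    rw [haDef, hbDef, hcDef, hm,
      ENNReal.toReal_add (measure_ne_top _ _) (measure_ne_top _ _)]
  have hHpos : (0:ℝ) < H := by
    by_contra hH0
    push_neg at hH0
    have hH00 : (H:ℝ) = 0 := le_antisymm hH0 (Nat.cast_nonneg H)
    rw [hH00] at hp
    simp only [mul_zero, div_zero] at hp
    exact absurd hp (not_lt.2 (div_nonneg ENNReal.toReal_nonneg ENNReal.toReal_nonneg))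
  have hpb : b / c < g / (2 * (H:ℝ)) := by
    rwa [Set.inter_comm] at hp
  have h2hb : b * (2 * (H:ℝ)) < g * c := (div_lt_div_iff₀ hc (by positivity)).1 hpb
  -- split integrals
  have hsplit : ∀ π : Pol, (∫ ω in Aev, V π ω ∂P)
      = (∫ ω in Aev ∩ Z0, V π ω ∂P) + ∫ ω in Aev ∩ Z1, V π ω ∂P := by
    intro π
    have := setIntegral_union hd (hAmeas.inter mZ1) (hint π).integrableOn
      ((hint π).integrableOn (s := Aev ∩ Z1))
    rwa [hunion] at this
  have hIub : ∀ (π : Pol) (s : Set Ω), MeasurableSet s →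
      (∫ ω in s, V π ω ∂P) ≤ (H:ℝ) * (P s).toReal := by
    intro π s hs
    have h1 : (∫ ω in s, V π ω ∂P) ≤ ∫ _ω in s, (H:ℝ) ∂P := by
      apply setIntegral_mono_on (hint π).integrableOn
        (integrableOn_const (measure_ne_top P s)) hs
      exact fun ω _ => hVle π ω
    rw [setIntegral_const, smul_eq_mul] at h1
    rw [measureReal_def] at h1
    linarith
  have hIlb : ∀ (π : Pol) (s : Set Ω), MeasurableSet s → 0 ≤ (∫ ω in s, V π ω ∂P) := by
    intro π s hs
    exact setIntegral_nonneg hs (fun ω _ => hVnn π ω)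
  set M : Pol → ℝ := fun π => condExpOn P (Aev ∩ Z0) (V π) with hM
  have hM0 : ∀ π, (∫ ω in Aev ∩ Z0, V π ω ∂P) = a * M π := by
    intro π
    rw [hM]
    simp only [condExpOn, ← haDef]
    field_simp
  have hMub : ∀ π, M π ≤ H := by
    intro π
    rw [hM]
    simp only [condExpOn, ← haDef]
    rw [div_le_iff₀ ha]
    calc (∫ ω in Aev ∩ Z0, V π ω ∂P) ≤ (H:ℝ) * a := hIub π _ (hAmeas.inter mZ0)
      _ = (H:ℝ) * a := rfl
  have hMlb : ∀ π, 0 ≤ M π := by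
    intro π
    exact div_nonneg (hIlb π _ (hAmeas.inter mZ0)) ha.le
  obtain ⟨πm, hπmPi, hsup⟩ := Finset.exists_mem_eq_sup' hne M
  have hgH : g ≤ (H:ℝ) := by
    obtain ⟨π', hπ'⟩ := id hcne
    have h1 : Pi.sup' hne M ≤ H := Finset.sup'_le hne M fun π _ => hMub π
    have h2 : (0:ℝ) ≤ (Finset.univ \ Pi).sup' hcne M :=
      le_trans (hMlb π') (Finset.le_sup' M hπ')
    calc g ≤ Pi.sup' hne M - (Finset.univ \ Pi).sup' hcne M := hgap
      _ ≤ (H:ℝ) - 0 := by gcongr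
      _ = H := sub_zero _
  have hkey : (H:ℝ) * b < a * g := by
    nlinarith [mul_nonneg hb (sub_nonneg.2 hgH)]
  -- main strict inequality
  have hmain : ∀ π' : Pol, π' ∈ Finset.univ \ Pi →
      condExpOn P Aev (V π') < condExpOn P Aev (V πm) := by
    intro π' hπ'
    have hM' : M π' ≤ M πm - g := by
      have h1 : M π' ≤ (Finset.univ \ Pi).sup' hcne M := Finset.le_sup' M hπ'
      have h2 : (Finset.univ \ Pi).sup' hcne M ≤ Pi.sup' hne M - g := by linarith
      rw [hsup] at h2
      linarith
    have hI' : (∫ ω in Aev, V π' ω ∂P) ≤ a * (M πm - g) + (H:ℝ) * b := by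
      rw [hsplit π', hM0 π']
      have := hIub π' (Aev ∩ Z1) (hAmeas.inter mZ1)
      rw [← hbDef] at this
      have hmul : a * M π' ≤ a * (M πm - g) := by
        exact mul_le_mul_of_nonneg_left hM' ha.le
      linarith
    have hIm : a * M πm ≤ (∫ ω in Aev, V πm ω ∂P) := by
      rw [hsplit πm, hM0 πm]
      have := hIlb πm (Aev ∩ Z1) (hAmeas.inter mZ1)
      linarith
    simp only [condExpOn, ← hcDef]
    rw [div_lt_div_iff₀ hc hc]
    have hlt : (∫ ω in Aev, V π' ω ∂P) < (∫ ω in Aev, V πm ω ∂P) := by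
      nlinarith [mul_pos ha hg]
    nlinarith
  intro π0 hmax
  by_contra h0
  have hπ0 : π0 ∈ Finset.univ \ Pi := Finset.mem_sdiff.2 ⟨Finset.mem_univ _, h0⟩
  have h1 := hmain π0 hπ0
  have h2 := hmax πm
  linarith

/-- **Hidden-hallucination incentive step.** Let `μ*` be a random MDP model on a probability
space, `A` an event with `P(A) > 0`, `Z` a `{0,1}`-valued (Boolean) random variable with
`P(A ∩ {Z = 0}) > 0`, and `p := P(Z = 1 | A)`. Let `Π` be a nonempty proper subset of the set
of all policies, and suppose `g > 0` satisfies
`max_{π∈Π} E[V(π,μ*) | A, Z=0] − max_{π∉Π} E[V(π,μ*) | A, Z=0] ≥ g`.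
If `p < g/(2H)`, then every maximizer of `π ↦ E[V(π,μ*) | A]` lies in `Π`. -/
theorem hidden_hallucination_incentive (S A H : ℕ)
    {Ω : Type*} [MeasurableSpace Ω] (P : MeasureTheory.Measure Ω) [IsProbabilityMeasure P]
    (μstar : Ω → MDPModel S A H)
    (hint : ∀ π : Policy S A H, Integrable (fun ω => value (μstar ω) π) P)
    (Aev : Set Ω) (hAmeas : MeasurableSet Aev) (hApos : 0 < P Aev)
    (Z : Ω → Bool) (hZmeas : Measurable Z)
    (hAZ0 : 0 < P (Aev ∩ {ω | Z ω = false}))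
    (Pi : Finset (Policy S A H)) (hne : Pi.Nonempty)
    (hcne : (Finset.univ \ Pi).Nonempty)
    (g : ℝ) (hg : 0 < g)
    (hgap : g ≤
      Pi.sup' hne (fun π => condExpOn P (Aev ∩ {ω | Z ω = false})
          (fun ω => value (μstar ω) π)) -
        (Finset.univ \ Pi).sup' hcne (fun π => condExpOn P (Aev ∩ {ω | Z ω = false})
          (fun ω => value (μstar ω) π)))
    (hp : (P ({ω | Z ω = true} ∩ Aev)).toReal / (P Aev).toReal < g / (2 * (H : ℝ))) :
    ∀ π0 : Policy S A H,
      (∀ π : Policy S A H, condExpOn P Aev (fun ω => value (μstar ω) π) ≤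
        condExpOn P Aev (fun ω => value (μstar ω) π0)) →
      π0 ∈ Pi := by
  exact hh_aux P (Policy S A H) (fun π ω => value (μstar ω) π) H
    (fun π ω => value_nonneg _ _) (fun π ω => value_le _ _)
    hint Aev hAmeas hApos Z hZmeas hAZ0 Pi hne hcne g hg hgap hp
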